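/- Let X be a set carrying two topologies t₀ and t₁ such that (X,t₀) is hereditarily Lindelöf and not separable, (X,t₁) is second countable, and every subset of X is a Gδ set in (X,t₁). Then the join topology t = t₀ ⊔ t₁ satisfies: (X,t) is hereditarily Lindelöf, (X,t) is not separable, and every subset of X is a Gδ set in (X,t). -/

import Mathlib

open Topology TopologicalSpace

/-- Suppose `(X, t₀)` is hereditarily Lindelöf and not separable, `(X, t₁)` is second
countable, and every subset of `X` is a `Gδ` set with respect to `t₁`.  Then the join
topology `t = t₀ ⊔ t₁` (generated by the union of `t₀` and `t₁`) is hereditarily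
Lindelöf, not separable, and every subset of `X` is a `Gδ` set with respect to `t`. -/
theorem stmt2 {X : Type*} (t₀ t₁ : TopologicalSpace X)
    (h₀L : @HereditarilyLindelofSpace X t₀)
    (h₀S : ¬ @SeparableSpace X t₀)
    (h₁C : @SecondCountableTopology X t₁)
    (h₁G : ∀ A : Set X, @IsGδ X t₁ A) :
    @HereditarilyLindelofSpace X
        (TopologicalSpace.generateFrom {s : Set X | IsOpen[t₀] s ∨ IsOpen[t₁] s}) ∧
    ¬ @SeparableSpace X
        (TopologicalSpace.generateFrom {s : Set X | IsOpen[t₀] s ∨ IsOpen[t₁] s}) ∧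
    ∀ A : Set X, @IsGδ X
        (TopologicalSpace.generateFrom {s : Set X | IsOpen[t₀] s ∨ IsOpen[t₁] s}) A := by
  have hTeq : TopologicalSpace.generateFrom {s : Set X | IsOpen[t₀] s ∨ IsOpen[t₁] s}
      = t₀ ⊓ t₁ := by
    rw [← generateFrom_union_isOpen]
    congr 1
  rw [hTeq]
  have hle₀ : t₀ ⊓ t₁ ≤ t₀ := inf_le_left
  have hle₁ : t₀ ⊓ t₁ ≤ t₁ := inf_le_right
  refine ⟨?_, ?_, ?_⟩
  · -- hereditarily Lindelöf
    obtain ⟨B, hBc, -, hBbasis⟩ := @TopologicalSpace.exists_countable_basis X t₁ h₁C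
    refine @HereditarilyLindelofSpace.mk X (t₀ ⊓ t₁) ?_
    intro A _
    apply @isLindelof_of_countable_subcover X (t₀ ⊓ t₁)
    intro ι U hUo hAU
    rcases A.eq_empty_or_nonempty with rfl | ⟨x₀, hx₀⟩
    · exact ⟨∅, Set.countable_empty, by simp⟩
    have : Nonempty ι := ⟨(Set.mem_iUnion.mp (hAU hx₀)).choose⟩
    -- choose for each point a basic neighborhood u ∩ b inside some U i
    have key : ∀ x ∈ A, ∃ (i : ι) (u b : Set X),
        IsOpen[t₀] u ∧ b ∈ B ∧ x ∈ u ∧ x ∈ b ∧ u ∩ b ⊆ U i := by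
      intro x hx
      obtain ⟨i, hi⟩ := Set.mem_iUnion.mp (hAU hx)
      have hUnhds : U i ∈ @nhds X (t₀ ⊓ t₁) x := by
        letI := t₀ ⊓ t₁
        exact (hUo i).mem_nhds hi
      rw [@nhds_inf X t₀ t₁ x] at hUnhds
      obtain ⟨u', hu', v', hv', hUuv⟩ := Filter.mem_inf_iff.mp hUnhds
      obtain ⟨u, huu', huo, hxu⟩ := (@_root_.mem_nhds_iff X t₀ x u') |>.mp hu'
      obtain ⟨b, hbB, hxb, hbv'⟩ := hBbasis.mem_nhds_iff.mp hv'
      exact ⟨i, u, b, huo, hbB, hxu, hxb, by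
        rw [hUuv]; exact Set.inter_subset_inter huu' hbv'⟩
    choose! i u b h1 h2 h3 h4 h5 using key
    -- for each basis element, a countable t₀-subcover of the corresponding slice
    have slice : ∀ b₀ ∈ B, ∃ c : Set X, c.Countable ∧ c ⊆ {x ∈ A | b x = b₀} ∧
        {x ∈ A | b x = b₀} ⊆ ⋃ y ∈ c, u y := by
      intro b₀ _
      set Tb : Set X := {x ∈ A | b x = b₀} with hTb
      have hL : @IsLindelof X t₀ Tb :=
        h₀L.isHereditarilyLindelof_univ Tb (Set.subset_univ _)
      obtain ⟨c, hcc, hcov⟩ := @IsLindelof.elim_countable_subcover X t₀ Tb ↥Tb hL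
        (fun y => u y) (fun y => h1 y y.2.1)
        (fun x hx => Set.mem_iUnion.mpr ⟨⟨x, hx⟩, h3 x hx.1⟩)
      refine ⟨Subtype.val '' c, hcc.image _, ?_, ?_⟩
      · rintro x ⟨y, -, rfl⟩; exact y.2
      · intro x hx
        obtain ⟨y, hyc, hyu⟩ := Set.mem_iUnion₂.mp (hcov hx)
        exact Set.mem_iUnion₂.mpr ⟨y, ⟨y, hyc, rfl⟩, hyu⟩
    choose! c hc1 hc2 hc3 using slice
    refine ⟨⋃ b₀ ∈ B, i '' c b₀, hBc.biUnion fun b₀ hb₀ => (hc1 b₀ hb₀).image _, ?_⟩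
    intro x hx
    have hxT : x ∈ {z ∈ A | b z = b x} := ⟨hx, rfl⟩
    obtain ⟨y, hyc, hyu⟩ := Set.mem_iUnion₂.mp (hc3 (b x) (h2 x hx) hxT)
    have hyT : y ∈ {z ∈ A | b z = b x} := hc2 (b x) (h2 x hx) hyc
    have hxUy : x ∈ U (i y) := by
      apply h5 y hyT.1
      exact ⟨hyu, by rw [hyT.2]; exact h4 x hx⟩
    exact Set.mem_iUnion₂.mpr ⟨i y, Set.mem_iUnion₂.mpr
      ⟨b x, h2 x hx, Set.mem_image_of_mem _ hyc⟩, hxUy⟩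
  · -- not separable
    intro hsep
    obtain ⟨s, hsc, hsd⟩ := @TopologicalSpace.exists_countable_dense X (t₀ ⊓ t₁) hsep
    apply h₀S
    exact @SeparableSpace.mk X t₀ ⟨s, hsc, fun x => closure.mono hle₀ (hsd x)⟩
  · -- every set is Gδ
    intro A
    obtain ⟨T, hTo, hTc, hTeq'⟩ := h₁G A
    exact ⟨T, fun t ht => (hTo t ht).mono hle₁, hTc, hTeq'⟩
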